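/- Let K be a group with normal subgroups B_1 ⊇ B_2 ⊇ ... arising as B_i = γ_i(K) ∩ N₁ for a normal subgroup N₁ of K, where K/Z is nilpotent of class c for a central-type subgroup Z with Z(K) = 1. If [B_t, B_s] = 1 whenever t + s = 2c + 1 (t, s ≥ 1), then [N₁′, K, ..., K] = 1 with m = 2c − 1 copies of K, i.e. [N₁′,_m K] ≤ ∏_{t+s=m+2, t,s≥1} [B_t, B_s] = 1; and since Z(K) = 1 this forces N₁′ = 1, i.e. N₁ is abelian. -/

import Mathlib

/-- Iterated commutator `[X,_m K]`: `[X,_0 K] = X`, `[X,_{n+1} K] = [[X,_n K], K]`. -/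
def iterComm {K : Type*} [Group K] (X : Subgroup K) : ℕ → Subgroup K
  | 0 => X
  | n + 1 => ⁅iterComm X n, (⊤ : Subgroup K)⁆

/-- With `B_i = γ_i(K) ∩ N₁`, if `[N₁',_m K] ≤ ∏_{t+s=m+2, t,s ≥ 1} [B_t, B_s]`
for `m = 2c - 1`, `[B_t, B_s] = 1` whenever `t + s = 2c + 1` (`t, s ≥ 1`), and
`Z(K) = 1`, then `N₁' = 1`, i.e. `N₁` is abelian. -/
theorem stmt16 {K : Type*} [Group K] (N₁ : Subgroup K) [N₁.Normal]
    (c : ℕ) (hc : 1 ≤ c) (m : ℕ) (hm : m = 2 * c - 1)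
    (B : ℕ → Subgroup K) (hB : ∀ i, B i = (⊤ : Subgroup K).lowerCentralSeries (i - 1) ⊓ N₁)
    (hcont : iterComm ⁅N₁, N₁⁆ m ≤
      ⨆ (t : ℕ) (s : ℕ) (_ : t + s = m + 2) (_ : 1 ≤ t) (_ : 1 ≤ s), ⁅B t, B s⁆)
    (hBtriv : ∀ t s : ℕ, 1 ≤ t → 1 ≤ s → t + s = 2 * c + 1 → ⁅B t, B s⁆ = ⊥)
    (hZK : Subgroup.center K = ⊥) :
    ⁅N₁, N₁⁆ = ⊥ := by
  open scoped commutatorElement in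
  have key : ∀ (Y : Subgroup K), ⁅Y, (⊤ : Subgroup K)⁆ = ⊥ → Y = ⊥ := by
    intro Y h
    rw [eq_bot_iff, ← hZK]
    intro y hy
    rw [Subgroup.mem_center_iff]
    intro k
    have : ⁅y, k⁆ ∈ (⊥ : Subgroup K) := by
      rw [← h]; exact Subgroup.commutator_mem_commutator hy (Subgroup.mem_top k)
    have h1 : ⁅y, k⁆ = 1 := Subgroup.mem_bot.mp this
    have := commutatorElement_eq_one_iff_mul_comm.mp h1
    exact this.symm
  -- first show iterComm ⁅N₁,N₁⁆ m = ⊥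
  have hsup : (⨆ (t : ℕ) (s : ℕ) (_ : t + s = m + 2) (_ : 1 ≤ t) (_ : 1 ≤ s),
      ⁅B t, B s⁆) = ⊥ := by
    apply le_bot_iff.mp
    apply iSup_le; intro t; apply iSup_le; intro s
    apply iSup_le; intro hts; apply iSup_le; intro ht; apply iSup_le; intro hs
    rw [hBtriv t s ht hs (by omega)]
  have hbot : iterComm ⁅N₁, N₁⁆ m = ⊥ := le_bot_iff.mp (hsup ▸ hcont)
  clear hcont hsup hBtriv hB hm
  induction m with
  | zero => exact hbot
  | succ n ih =>
    exact ih (key _ hbot)
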